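/- For all real constants c_1 >= 1 and c_2 >= 1 there exist a constant C > 0 and a threshold Delta_0 such that for every integer Delta >= Delta_0 the following holds: set L = log_2(Delta) and R_0 = 4 * log_2(L), and let m be the least natural number with R_0 * 2^m >= c_1 * L. Then 2^m * (c_2 * R_0^2 + 10 * R_0 * m) <= C * L * log_2(L). -/
import Mathlib
set_option maxHeartbeats 1000000 in


/-- Exponent computation in the proof of the main LCA theorem: unfolding the query
recurrence from `T = c₁·log₂ Δ` down to base phase length `R₀ = 4·log₂ log₂ Δ`
with base cost exponent `c₂·R₀²` yields a total exponent `O(log₂ Δ · log₂ log₂ Δ)`. -/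
theorem lca_exponent_computation
    (c₁ c₂ : ℝ) (hc₁ : 1 ≤ c₁) (hc₂ : 1 ≤ c₂) :
    ∃ C : ℝ, 0 < C ∧ ∃ Δ₀ : ℕ, ∀ Δ : ℕ, Δ₀ ≤ Δ →
      ∀ m : ℕ,
        c₁ * Real.logb 2 Δ ≤ 4 * Real.logb 2 (Real.logb 2 Δ) * 2 ^ m →
        (∀ m' : ℕ, m' < m →
          4 * Real.logb 2 (Real.logb 2 Δ) * 2 ^ m' < c₁ * Real.logb 2 Δ) →
        (2 : ℝ) ^ m *
            (c₂ * (4 * Real.logb 2 (Real.logb 2 Δ)) ^ 2 +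
              10 * (4 * Real.logb 2 (Real.logb 2 Δ)) * m)
          ≤ C * Real.logb 2 Δ * Real.logb 2 (Real.logb 2 Δ) := by
  have hb : 0 ≤ Real.logb 2 c₁ := Real.logb_nonneg one_lt_two hc₁
  set b := Real.logb 2 c₁ with hbdef
  refine ⟨2 * c₁ * (4 * c₂ + 10 + 10 * b) + 32 * c₂, by nlinarith, 16, ?_⟩
  intro Δ hΔ m h1 h2
  set L := Real.logb 2 (Δ : ℝ) with hLdef
  have hΔ16 : (16 : ℝ) ≤ (Δ : ℝ) := by exact_mod_cast hΔ
  have h16 : Real.logb 2 (16 : ℝ) = 4 := by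
    have h : (16 : ℝ) = 2 ^ (4 : ℕ) := by norm_num
    rw [h, Real.logb_pow, Real.logb_self_eq_one one_lt_two]
    norm_num
  have hL4 : (4 : ℝ) ≤ L := by
    have h := (Real.logb_le_logb one_lt_two (by norm_num : (0:ℝ) < 16)
      (by linarith : (0:ℝ) < (Δ:ℝ))).2 hΔ16
    rw [h16] at h
    exact h
  set ℓ := Real.logb 2 L with hldef
  have h4 : Real.logb 2 (4 : ℝ) = 2 := by
    have h : (4 : ℝ) = 2 ^ (2 : ℕ) := by norm_num
    rw [h, Real.logb_pow, Real.logb_self_eq_one one_lt_two]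
    norm_num
  have hl2 : (2 : ℝ) ≤ ℓ := by
    have h := (Real.logb_le_logb one_lt_two (by norm_num : (0:ℝ) < 4)
      (by linarith : (0:ℝ) < L)).2 hL4
    rw [h4] at h
    exact h
  have hlogL : Real.log L ≤ L := Real.log_le_self (by linarith)
  have hlog2 : (0.6931471803 : ℝ) < Real.log 2 := Real.log_two_gt_d9
  have hleq : ℓ * Real.log 2 = Real.log L := by
    rw [hldef, Real.logb]
    field_simp
  have hlL : ℓ ≤ 2 * L := by nlinarith
  have hCrest : (0 : ℝ) ≤ 2 * c₁ * (4 * c₂ + 10 + 10 * b) * (L * ℓ) :=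
    mul_nonneg (mul_nonneg (by linarith) (by linarith))
      (mul_nonneg (by linarith) (by linarith))
  rcases Nat.eq_zero_or_pos m with hm0 | hmpos
  · subst hm0
    simp only [pow_zero, Nat.cast_zero, one_mul, mul_zero, add_zero]
    have h1 : ℓ * ℓ ≤ 2 * L * ℓ := by nlinarith
    nlinarith [mul_nonneg (mul_nonneg (by linarith : (0:ℝ) ≤ 2 * c₁)
        (by linarith : (0:ℝ) ≤ 4 * c₂ + 10 + 10 * b))
      (mul_nonneg (by linarith : (0:ℝ) ≤ L) (by linarith : (0:ℝ) ≤ ℓ)),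
      mul_le_mul_of_nonneg_left h1 (by linarith : (0:ℝ) ≤ 16 * c₂)]
  · obtain ⟨k, rfl⟩ : ∃ k, m = k + 1 := ⟨m - 1, (Nat.succ_pred_eq_of_pos hmpos).symm⟩
    have hk := h2 k (Nat.lt_succ_self k)
    have hm : ((k + 1 : ℕ) : ℝ) ≤ b + ℓ := by
      have hpk1 : (0 : ℝ) < 2 ^ (k + 1) := by positivity
      have hA : 4 * ℓ * 2 ^ (k + 1) ≤ 2 * (c₁ * L) := by
        have : (2 : ℝ) ^ (k + 1) = 2 * 2 ^ k := by ring
        rw [this]; nlinarith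
      have hB : (2 : ℝ) ^ (k + 1) ≤ c₁ * L := by
        nlinarith [mul_nonneg (show (0:ℝ) ≤ ℓ - 2 by linarith) hpk1.le]
      have hc₁L : (0 : ℝ) < c₁ * L := by nlinarith
      have h2m : Real.logb 2 ((2 : ℝ) ^ (k + 1)) = ((k + 1 : ℕ) : ℝ) := by
        rw [Real.logb_pow, Real.logb_self_eq_one one_lt_two]; ring
      have hmono := (Real.logb_le_logb one_lt_two hpk1 hc₁L).2 hB
      rw [h2m, Real.logb_mul (by linarith) (by linarith)] at hmono
      rw [hbdef, hldef]
      exact hmono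
    -- generalize the power and the cast
    have hpk1 : (0 : ℝ) < 2 ^ (k + 1) := by positivity
    have hA : 4 * ℓ * 2 ^ (k + 1) ≤ 2 * (c₁ * L) := by
      have : (2 : ℝ) ^ (k + 1) = 2 * 2 ^ k := by ring
      rw [this]; nlinarith
    clear_value ℓ L b
    generalize hn : ((k + 1 : ℕ) : ℝ) = n at hm ⊢
    generalize hx : (2 : ℝ) ^ (k + 1) = x at hpk1 hA ⊢
    have hn0 : 0 ≤ n := by rw [← hn]; positivity
    clear h1 h2 hk hn hx hΔ16 h16 h4 hleq hlog2 hlogL hLdef hldef hbdef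
    have key : x * (c₂ * (4 * ℓ) ^ 2 + 10 * (4 * ℓ) * n)
        = (4 * ℓ * x) * (4 * c₂ * ℓ + 10 * n) := by ring
    rw [key]
    have hfac : 4 * c₂ * ℓ + 10 * n ≤ (4 * c₂ + 10 + 10 * b) * ℓ := by
      have hrw : (4 * c₂ + 10 + 10 * b) * ℓ
          = 4 * c₂ * ℓ + 10 * ℓ + 10 * (b * (ℓ - 1)) + 10 * b := by ring
      rw [hrw]
      linarith [mul_nonneg hb (show (0:ℝ) ≤ ℓ - 1 by linarith)]
    have h5 : (4 * ℓ * x) * (4 * c₂ * ℓ + 10 * n)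
        ≤ (2 * (c₁ * L)) * ((4 * c₂ + 10 + 10 * b) * ℓ) := by
      refine mul_le_mul hA hfac ?_ ?_
      · have h1 := mul_nonneg (show (0:ℝ) ≤ 4 * c₂ by linarith)
          (show (0:ℝ) ≤ ℓ by linarith)
        linarith
      · have h2 := mul_nonneg (show (0:ℝ) ≤ c₁ by linarith)
          (show (0:ℝ) ≤ L by linarith)
        linarith
    have h32 : (0:ℝ) ≤ 32 * c₂ * (L * ℓ) :=
      mul_nonneg (by linarith) (mul_nonneg (by linarith) (by linarith))
    linarith [h5, h32]
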